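/- arXiv:2204.12773 — 2 statements merged into one kernel-verified Lean document; each statement's English description precedes it below -/
import Mathlib

section
/- Let 0 = d_0 < d_1 < ⋯ < d_r < n be natural numbers and let L_1 ⊆ L_2 ⊆ ⋯ ⊆ L_r be ℂ-subspaces of Fin n → ℂ with dim L_k = d_k for all k, such that for each k the coordinate projection π_{{0,…,d_k−1}} restricted to L_k is a linear isomorphism. Then there exists a unique d_r × n matrix M over ℂ such that: (i) for each k ∈ {1,…,r}, each row index i with d_{k−1} ≤ i < d_k, and each column index j < d_k, the entry M i j equals 1 if i = j and 0 otherwise; and (ii) for each k, L_k equals the span of the first d_k rows of M. -/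
/-- Let `0 = d_0 < d_1 < ⋯ < d_r < n` and let `L_1 ⊆ ⋯ ⊆ L_r` be a flag of subspaces of
`Fin n → ℂ` with `dim L_k = d_k`, such that for each `k` the projection to the first
`d_k` coordinates restricts to a linear isomorphism on `L_k`.  Then there is a unique
`d_r × n` matrix `M` in the blocked normal form (identity/zero pattern in the columns
`j < d_k` of the row block `d_{k-1} ≤ i < d_k`) such that each `L_k` is the span of the
first `d_k` rows of `M`.  (Here `L k` denotes `L_{k+1}` and the index `k : Fin r`
runs over `0, …, r-1`.) -/
theorem stmt5 (n r : ℕ) (d : ℕ → ℕ) (hd0 : d 0 = 0)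
    (hd : ∀ k < r, d k < d (k + 1)) (hdn : d r < n)
    (L : Fin r → Submodule ℂ (Fin n → ℂ)) (hmono : Monotone L)
    (hrank : ∀ k : Fin r, Module.finrank ℂ (L k) = d ((k : ℕ) + 1))
    (hbij : ∀ k : Fin r, Function.Bijective
      ((LinearMap.funLeft ℂ ℂ
          (fun j : {j : Fin n // (j : ℕ) < d ((k : ℕ) + 1)} => (j : Fin n))).comp
        (L k).subtype)) :
    ∃! M : Matrix (Fin (d r)) (Fin n) ℂ,
      (∀ k : Fin r, ∀ i : Fin (d r), ∀ j : Fin n,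
          d (k : ℕ) ≤ (i : ℕ) → (i : ℕ) < d ((k : ℕ) + 1) → (j : ℕ) < d ((k : ℕ) + 1) →
          M i j = if (i : ℕ) = (j : ℕ) then 1 else 0)
      ∧ (∀ k : Fin r, L k = Submodule.span ℂ
          (Set.range fun i : {i : Fin (d r) // (i : ℕ) < d ((k : ℕ) + 1)} => M i)) := by
  classical
  -- monotonicity of d on [0, r]
  have dmono : ∀ a b : ℕ, a ≤ b → b ≤ r → d a ≤ d b := by
    intro a b hab hbr
    induction b with
    | zero => simp [Nat.le_zero.mp hab]
    | succ b ih =>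
      rcases Nat.lt_or_ge a (b + 1) with h | h
      · exact le_trans (ih (Nat.lt_succ_iff.mp h) (le_trans (Nat.le_succ b) hbr))
          (le_of_lt (hd b (Nat.lt_of_succ_le hbr)))
      · have : a = b + 1 := le_antisymm hab h
        simp [this]
  -- the linear equivalences given by the bijective projections
  set e : (k : Fin r) → (↥(L k) ≃ₗ[ℂ] ({j : Fin n // (j : ℕ) < d ((k : ℕ) + 1)} → ℂ)) :=
    fun k => LinearEquiv.ofBijective _ (hbij k) with he
  have heval : ∀ (k : Fin r) (x : ↥(L k)) (jt : {j : Fin n // (j : ℕ) < d ((k : ℕ) + 1)}),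
      e k x jt = (x : Fin n → ℂ) (jt : Fin n) := by
    intro k x jt
    rw [he]
    rfl
  -- block of a row index
  have hblk : ∀ i : Fin (d r), ∃ k : Fin r, d (k : ℕ) ≤ (i : ℕ) ∧ (i : ℕ) < d ((k : ℕ) + 1) := by
    intro i
    set P := fun k => d k ≤ (i : ℕ) with hP
    have hP0 : P 0 := by simp [hP, hd0]
    set k := Nat.findGreatest P r with hk
    have hkr : k ≤ r := Nat.findGreatest_le r
    have hspec : P k := Nat.findGreatest_spec (Nat.zero_le r) hP0
    have hklt : k < r := by
      rcases lt_or_eq_of_le hkr with h | h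
      · exact h
      · exfalso; rw [h] at hspec; exact absurd hspec (not_le.mpr i.2)
    refine ⟨⟨k, hklt⟩, hspec, ?_⟩
    have hgr : ¬ P (k + 1) :=
      Nat.findGreatest_is_greatest (Nat.lt_succ_self k) hklt
    simpa [hP] using hgr
  choose blk hblk1 hblk2 using hblk
  have hblk_uniq : ∀ (k k' : Fin r) (i : ℕ), d (k : ℕ) ≤ i → i < d ((k : ℕ) + 1) →
      d (k' : ℕ) ≤ i → i < d ((k' : ℕ) + 1) → k = k' := by
    intro k k' i h1 h2 h3 h4
    rcases lt_trichotomy (k : ℕ) (k' : ℕ) with h | h | h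
    · have : d ((k : ℕ) + 1) ≤ d (k' : ℕ) := dmono _ _ h (le_of_lt k'.2)
      omega
    · exact Fin.ext h
    · have : d ((k' : ℕ) + 1) ≤ d (k : ℕ) := dmono _ _ h (le_of_lt k.2)
      omega
  -- the rows of the matrix
  set row : (i : Fin (d r)) → ↥(L (blk i)) := fun i =>
    (e (blk i)).symm (fun jt => if ((jt : Fin n) : ℕ) = (i : ℕ) then 1 else 0) with hrow
  set M : Matrix (Fin (d r)) (Fin n) ℂ := fun i => (row i : Fin n → ℂ) with hM
  have memA : ∀ i : Fin (d r), M i ∈ L (blk i) := fun i => (row i).2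
  have keyA : ∀ (i : Fin (d r)) (j : Fin n), (j : ℕ) < d ((blk i : ℕ) + 1) →
      M i j = if (j : ℕ) = (i : ℕ) then 1 else 0 := by
    intro i j hj
    have h1 : e (blk i) (row i) = fun jt : {j : Fin n // (j : ℕ) < d ((blk i : ℕ) + 1)} =>
        if ((jt : Fin n) : ℕ) = (i : ℕ) then (1 : ℂ) else 0 := by
      rw [hrow]
      exact (e (blk i)).apply_symm_apply _
    have h2 := congrFun h1 ⟨j, hj⟩
    rw [heval] at h2
    exact h2
  have pat : ∀ k : Fin r, ∀ i : Fin (d r), ∀ j : Fin n,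
      d (k : ℕ) ≤ (i : ℕ) → (i : ℕ) < d ((k : ℕ) + 1) → (j : ℕ) < d ((k : ℕ) + 1) →
      M i j = if (i : ℕ) = (j : ℕ) then 1 else 0 := by
    intro k i j h1 h2 hj
    have hk : blk i = k := hblk_uniq _ _ _ (hblk1 i) (hblk2 i) h1 h2
    rw [keyA i j (by rw [hk]; exact hj)]
    simp [eq_comm]
  have blk_le : ∀ (k : Fin r) (i : Fin (d r)), (i : ℕ) < d ((k : ℕ) + 1) → blk i ≤ k := by
    intro k i hi
    by_contra h
    have h' : (k : ℕ) + 1 ≤ (blk i : ℕ) := not_le.mp h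
    have : d ((k : ℕ) + 1) ≤ d (blk i : ℕ) := dmono _ _ h' (le_of_lt (blk i).2)
    have := hblk1 i
    omega
  -- the span condition
  have spanA : ∀ k : Fin r, L k = Submodule.span ℂ
      (Set.range fun i : {i : Fin (d r) // (i : ℕ) < d ((k : ℕ) + 1)} => M i) := by
    intro k
    have hmr : d ((k : ℕ) + 1) ≤ d r := dmono _ _ k.2 le_rfl
    have hmn : d ((k : ℕ) + 1) < n := lt_of_le_of_lt hmr hdn
    have hle : Submodule.span ℂ
        (Set.range fun i : {i : Fin (d r) // (i : ℕ) < d ((k : ℕ) + 1)} => M (i : Fin (d r)))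
        ≤ L k := by
      rw [Submodule.span_le]
      rintro _ ⟨i, rfl⟩
      exact hmono (blk_le k i i.2) (memA i)
    -- the triangular matrix of truncated rows
    set A : Matrix (Fin (d ((k : ℕ) + 1))) (Fin (d ((k : ℕ) + 1))) ℂ := fun a b =>
      M ⟨a, lt_of_lt_of_le a.2 hmr⟩ ⟨b, lt_trans b.2 hmn⟩ with hA
    have hAtri : A.BlockTriangular id := by
      intro a b hba
      have hba' : (b : ℕ) < (a : ℕ) := hba
      have hi := hblk2 (⟨a, lt_of_lt_of_le a.2 hmr⟩ : Fin (d r))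
      have hj : ((⟨b, lt_trans b.2 hmn⟩ : Fin n) : ℕ) <
          d ((blk (⟨a, lt_of_lt_of_le a.2 hmr⟩ : Fin (d r)) : ℕ) + 1) := by
        simp only [Fin.val_mk] at hi ⊢
        omega
      simp only [hA]
      rw [keyA _ _ hj]
      have hne : (b : ℕ) ≠ (a : ℕ) := Nat.ne_of_lt hba'
      simp [Fin.val_mk, hne]
    have hAdiag : ∀ a, A a a = 1 := by
      intro a
      have hi := hblk2 (⟨a, lt_of_lt_of_le a.2 hmr⟩ : Fin (d r))
      have hj : ((⟨a, lt_trans a.2 hmn⟩ : Fin n) : ℕ) <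
          d ((blk (⟨a, lt_of_lt_of_le a.2 hmr⟩ : Fin (d r)) : ℕ) + 1) := by
        simp only [Fin.val_mk] at hi ⊢
        omega
      simp only [hA]
      rw [keyA _ _ hj]
      simp [Fin.val_mk]
    have hAdet : A.det = 1 := by
      rw [Matrix.det_of_upperTriangular hAtri]
      simp [hAdiag]
    have hAunit : IsUnit A := by
      rw [Matrix.isUnit_iff_isUnit_det, hAdet]
      exact isUnit_one
    have liA : LinearIndependent ℂ (fun a => A a) :=
      Matrix.linearIndependent_rows_iff_isUnit.mpr hAunit
    -- transfer linear independence to the family of full rows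
    set P : (Fin n → ℂ) →ₗ[ℂ] (Fin (d ((k : ℕ) + 1)) → ℂ) :=
      LinearMap.funLeft ℂ ℂ (fun b : Fin (d ((k : ℕ) + 1)) => (⟨b, lt_trans b.2 hmn⟩ : Fin n))
      with hP
    set fam : {i : Fin (d r) // (i : ℕ) < d ((k : ℕ) + 1)} → (Fin n → ℂ) :=
      fun i => M (i : Fin (d r)) with hfam
    set e1 : Fin (d ((k : ℕ) + 1)) ≃ {i : Fin (d r) // (i : ℕ) < d ((k : ℕ) + 1)} :=
      { toFun := fun a => ⟨⟨a, lt_of_lt_of_le a.2 hmr⟩, a.2⟩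
        invFun := fun i => ⟨(i : Fin (d r)), i.2⟩
        left_inv := fun a => rfl
        right_inv := fun i => rfl } with he1
    have hcomp : (P ∘ fam) ∘ e1 = fun a => A a := by
      funext a
      funext b
      rfl
    have li1 : LinearIndependent ℂ ((P ∘ fam) ∘ e1) := by rw [hcomp]; exact liA
    have li2 : LinearIndependent ℂ (P ∘ fam) := (linearIndependent_equiv e1).mp li1
    have li3 : LinearIndependent ℂ fam := li2.of_comp P
    have hcard : Fintype.card {i : Fin (d r) // (i : ℕ) < d ((k : ℕ) + 1)} = d ((k : ℕ) + 1) := by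
      rw [← Fintype.card_congr e1, Fintype.card_fin]
    have hfr : Module.finrank ℂ (L k) ≤
        Module.finrank ℂ (Submodule.span ℂ (Set.range fam)) := by
      rw [hrank k, finrank_span_eq_card li3, hcard]
    exact (Submodule.eq_of_le_of_finrank_le hle hfr).symm
  refine ⟨M, ⟨pat, spanA⟩, ?_⟩
  -- uniqueness
  rintro M' ⟨pat', span'⟩
  funext i
  have h1 : M' i ∈ L (blk i) := by
    rw [span' (blk i)]
    exact Submodule.subset_span ⟨⟨i, hblk2 i⟩, rfl⟩
  have h2 : M i ∈ L (blk i) := memA i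
  have hproj : e (blk i) ⟨M' i, h1⟩ = e (blk i) ⟨M i, h2⟩ := by
    funext jt
    rw [heval, heval]
    have e1 : M' i (jt : Fin n) = if (i : ℕ) = ((jt : Fin n) : ℕ) then 1 else 0 :=
      pat' (blk i) i (jt : Fin n) (hblk1 i) (hblk2 i) jt.2
    have e2 : M i (jt : Fin n) = if (i : ℕ) = ((jt : Fin n) : ℕ) then 1 else 0 :=
      pat (blk i) i (jt : Fin n) (hblk1 i) (hblk2 i) jt.2
    simp [e1, e2]
  have := (e (blk i)).injective hproj
  exact congrArg Subtype.val this
end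

section
/- Let a, b, c, d ∈ ℂ, let M be the 2 × 4 matrix with rows (1, 0, a, b) and (0, 1, c, d), and let L be the row span of M. Then for every 2-element subset I of Fin 4 the coordinate projection π_I restricted to L is a linear isomorphism onto (I → ℂ) if and only if a ≠ 0, b ≠ 0, c ≠ 0, d ≠ 0 and a·d − b·c ≠ 0. -/
/-- The coordinate projection `π_I : (Fin n → ℂ) → (I → ℂ)`, restricting a vector to its
coordinates in `I`. -/
def coordProj {n : ℕ} (I : Finset (Fin n)) : (Fin n → ℂ) →ₗ[ℂ] (I → ℂ) :=
  LinearMap.funLeft ℂ ℂ (fun j : I => (j : Fin n))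

lemma solve2 (p q r s u v : ℂ) (h1 : u * p + v * q = 0) (h2 : u * r + v * s = 0)
    (hdet : p * s - q * r ≠ 0) : u = 0 ∧ v = 0 := by
  constructor
  · have h : u * (p * s - q * r) = (u * p + v * q) * s - (u * r + v * s) * q := by ring
    rw [h1, h2] at h; simp at h
    exact h.resolve_right hdet
  · have h : v * (p * s - q * r) = (u * r + v * s) * p - (u * p + v * q) * r := by ring
    rw [h1, h2] at h; simp at h
    exact h.resolve_right hdet

lemma vzero (v : Fin 2 → ℂ) (h : v 0 = 0 ∧ v 1 = 0) : v = 0 := by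
  funext i; fin_cases i <;> simp [h.1, h.2]

/-- Let `L` be the row span of the matrix with rows `(1, 0, a, b)` and `(0, 1, c, d)`.
Then every coordinate projection `π_I`, for `I ⊆ Fin 4` with `|I| = 2`, restricts to a
linear isomorphism on `L` iff `a ≠ 0`, `b ≠ 0`, `c ≠ 0`, `d ≠ 0` and `a·d − b·c ≠ 0`:
this characterizes the smallest chart of the distinguished atlas on `Gr(2;4)`. -/
theorem stmt11 (a b c d : ℂ) (M : Matrix (Fin 2) (Fin 4) ℂ)
    (hM : M = Matrix.of ![![1, 0, a, b], ![0, 1, c, d]])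
    (L : Submodule ℂ (Fin 4 → ℂ))
    (hL : L = Submodule.span ℂ (Set.range fun i => M i)) :
    (∀ I : Finset (Fin 4), I.card = 2 →
        Function.Bijective ((coordProj I).comp L.subtype))
      ↔ (a ≠ 0 ∧ b ≠ 0 ∧ c ≠ 0 ∧ d ≠ 0 ∧ a * d - b * c ≠ 0) := by
  have hinj : Function.Injective M.vecMulLinear := by
    intro v w h
    have h0 := congrFun h 0
    have h1 := congrFun h 1
    simp [hM, Matrix.vecMulLinear_apply, Matrix.vecMul, dotProduct,
      Fin.sum_univ_two] at h0 h1
    funext i; fin_cases i <;> assumption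
  have hrange : LinearMap.range M.vecMulLinear = L := by
    rw [hL, range_vecMulLinear]; rfl
  let e : (Fin 2 → ℂ) ≃ₗ[ℂ] L :=
    (LinearEquiv.ofInjective _ hinj).trans (LinearEquiv.ofEq _ _ hrange)
  have hbij : ∀ I : Finset (Fin 4),
      Function.Bijective ((coordProj I).comp L.subtype) ↔
      Function.Bijective ((coordProj I).comp M.vecMulLinear) := by
    intro I
    have hc : ⇑((coordProj I).comp M.vecMulLinear)
        = ⇑((coordProj I).comp L.subtype) ∘ ⇑e := by
      funext v
      simp [e, coordProj]
    rw [hc]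
    exact (Function.Bijective.of_comp_iff _ e.bijective).symm
  have happ : ∀ (I : Finset (Fin 4)) (v : Fin 2 → ℂ) (j : Fin 4) (hj : j ∈ I),
      ((coordProj I).comp M.vecMulLinear v) ⟨j, hj⟩ = v 0 * M 0 j + v 1 * M 1 j := by
    intro I v j hj
    simp [coordProj, Matrix.vecMul, dotProduct, Fin.sum_univ_two]
  simp only [hbij]
  constructor
  · intro H
    have key : ∀ (I : Finset (Fin 4)), I.card = 2 → ∀ (v : Fin 2 → ℂ),
        (∀ j ∈ I, v 0 * M 0 j + v 1 * M 1 j = 0) → v = 0 := by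
      intro I h2 v hv
      have h0 : (coordProj I).comp M.vecMulLinear v = 0 := by
        funext j
        rcases j with ⟨j, hj⟩
        rw [happ I v j hj]
        simpa using hv j hj
      exact (H I h2).1 (h0.trans (map_zero _).symm)
    have ha : a ≠ 0 := by
      intro h
      have h0 := key {1, 2} (by decide) ![1, 0] ?_
      · simpa using congrFun h0 0
      · intro j hj; fin_cases hj <;> simp [hM, h]
    have hb : b ≠ 0 := by
      intro h
      have h0 := key {1, 3} (by decide) ![1, 0] ?_
      · simpa using congrFun h0 0
      · intro j hj; fin_cases hj <;> simp [hM, h]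
    have hc : c ≠ 0 := by
      intro h
      have h0 := key {0, 2} (by decide) ![0, 1] ?_
      · simpa using congrFun h0 1
      · intro j hj; fin_cases hj <;> simp [hM, h]
    have hd : d ≠ 0 := by
      intro h
      have h0 := key {0, 3} (by decide) ![0, 1] ?_
      · simpa using congrFun h0 1
      · intro j hj; fin_cases hj <;> simp [hM, h]
    refine ⟨ha, hb, hc, hd, ?_⟩
    intro h
    have h0 := key {2, 3} (by decide) ![c, -a] ?_
    · exact ha (neg_eq_zero.mp (by simpa using congrFun h0 1))
    · intro j hj
      fin_cases hj
      · simp [hM]; ring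
      · simp [hM]; linear_combination -h
  · rintro ⟨ha, hb, hc, hd, hdet⟩ I hI
    have hfr : Module.finrank ℂ (Fin 2 → ℂ) = Module.finrank ℂ (↥I → ℂ) := by
      simp [Module.finrank_fintype_fun_eq_card, hI]
    have hinjI : Function.Injective ((coordProj I).comp M.vecMulLinear) := by
      rw [injective_iff_map_eq_zero]
      intro v hv
      have key : ∀ j ∈ I, v 0 * M 0 j + v 1 * M 1 j = 0 := by
        intro j hj
        rw [← happ I v j hj, hv]
        rfl
      obtain ⟨x, y, hxy, rfl⟩ := Finset.card_eq_two.mp hI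
      have e1 : v 0 * M 0 x + v 1 * M 1 x = 0 := key x (by simp)
      have e2 : v 0 * M 0 y + v 1 * M 1 y = 0 := key y (by simp)
      clear key hv
      fin_cases x <;> fin_cases y <;>
        first
          | exact absurd rfl hxy
          | (refine vzero v (solve2 _ _ _ _ _ _ e1 e2 ?_)
             simp [hM]
             all_goals first
               | exact ha | exact hb | exact hc | exact hd
               | simpa using ha | simpa using hb | simpa using hc | simpa using hd
               | (intro h; exact hdet (by linear_combination h))
               | (intro h; exact hdet (by linear_combination -h)))
    exact ⟨hinjI, (LinearMap.injective_iff_surjective_of_finrank_eq_finrank hfr).1 hinjI⟩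
end
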